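/- arXiv:2205.13307 — 2 statements merged into one kernel-verified Lean document; each statement's English description precedes it below -/
import Mathlib

section
/- Let Y be an n×n (here d×d) positive semidefinite symmetric random matrix, let F and G be real random variables with |F| ≤ G almost surely, and suppose E|Y_{ij} F| < ∞ for all i,j. Then for any σ-field 𝒢, ‖E[Y F | 𝒢]‖_{H.S.} ≤ ‖E[Y G | 𝒢]‖_{H.S.} almost surely, where ‖·‖_{H.S.} is the Hilbert–Schmidt (Frobenius) norm. -/
open MeasureTheory ProbabilityTheory

lemma trace_nonneg_of_psd {n : Type*} [Fintype n] {P : Matrix n n ℝ} (h : P.PosSemidef) :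
    0 ≤ P.trace := by
  rw [Matrix.trace]
  refine Finset.sum_nonneg fun i _ => ?_
  classical
  have := h.dotProduct_mulVec_nonneg (Pi.single i 1)
  simpa [dotProduct, Matrix.mulVec, Pi.single_apply, Finset.mul_sum,
    mul_comm] using this

open scoped MatrixOrder in
lemma trace_mul_psd_nonneg {n : Type*} [Fintype n] [DecidableEq n]
    {P Q : Matrix n n ℝ} (hP : P.PosSemidef) (hQ : Q.PosSemidef) :
    0 ≤ (P * Q).trace := by
  have hC := Matrix.nonneg_iff_posSemidef.mp (CFC.sqrt_nonneg P)
  have hCh : Matrix.conjTranspose (CFC.sqrt P) = CFC.sqrt P := hC.1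
  have h1 : P * Q = CFC.sqrt P * (CFC.sqrt P * Q) := by
    rw [← mul_assoc, CFC.sqrt_mul_sqrt_self P hP.nonneg]
  rw [h1, Matrix.trace_mul_comm, mul_assoc]
  have : (CFC.sqrt P * Q * CFC.sqrt P).PosSemidef := by
    have := hQ.mul_mul_conjTranspose_same (CFC.sqrt P)
    rwa [hCh] at this
  have := trace_nonneg_of_psd this
  rwa [mul_assoc] at this

lemma hs_key {d : ℕ} (A B : Matrix (Fin d) (Fin d) ℝ)
    (h1 : (B - A).PosSemidef) (h2 : (B + A).PosSemidef) :
    ∑ i, ∑ j, (A i j) ^ 2 ≤ ∑ i, ∑ j, (B i j) ^ 2 := by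
  have hsub : ∀ i j, (B - A) i j = (B - A) j i := by
    intro i j
    have := congrFun (congrFun h1.1 j) i
    simpa [Matrix.conjTranspose_apply, eq_comm] using this
  have hadd : ∀ i j, (B + A) i j = (B + A) j i := by
    intro i j
    have := congrFun (congrFun h2.1 j) i
    simpa [Matrix.conjTranspose_apply, eq_comm] using this
  have hA : ∀ i j, A i j = A j i := by
    intro i j
    have h3 := hsub i j; have h4 := hadd i j
    simp only [Matrix.sub_apply, Matrix.add_apply] at h3 h4
    linarith
  have hB : ∀ i j, B i j = B j i := by
    intro i j
    have h3 := hsub i j; have h4 := hadd i j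
    simp only [Matrix.sub_apply, Matrix.add_apply] at h3 h4
    linarith
  have htr : ((B - A) * (B + A)).trace
      = (∑ i, ∑ j, (B i j) ^ 2) - ∑ i, ∑ j, (A i j) ^ 2 := by
    rw [Matrix.trace]
    simp only [Matrix.diag_apply, Matrix.mul_apply, Matrix.sub_apply, Matrix.add_apply]
    rw [← Finset.sum_sub_distrib]
    refine Finset.sum_congr rfl fun i _ => ?_
    rw [← Finset.sum_sub_distrib]
    refine Finset.sum_congr rfl fun j _ => ?_
    rw [hA j i, hB j i]; ring
  have := trace_mul_psd_nonneg h1 h2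
  linarith [htr ▸ this]

lemma psd_of_rat {d : ℕ} (M : Matrix (Fin d) (Fin d) ℝ)
    (hsym : ∀ i j, M i j = M j i)
    (h : ∀ x : Fin d → ℚ, 0 ≤ ∑ i, ∑ j, (x i : ℝ) * (x j : ℝ) * M i j) :
    M.PosSemidef := by
  have hquad : ∀ y : Fin d → ℝ,
      dotProduct (star y) (M.mulVec y) = ∑ i, ∑ j, y i * y j * M i j := by
    intro y
    simp only [dotProduct, Matrix.mulVec, Pi.star_apply, star_trivial]
    refine Finset.sum_congr rfl fun i _ => ?_
    rw [Finset.mul_sum]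
    refine Finset.sum_congr rfl fun j _ => ?_
    ring
  refine Matrix.PosSemidef.of_dotProduct_mulVec_nonneg ?_ ?_
  · ext i j
    simp [Matrix.conjTranspose_apply, hsym j i]
  · intro y
    rw [hquad]
    have hcont : Continuous fun z : Fin d → ℝ => ∑ i, ∑ j, z i * z j * M i j := by
      refine continuous_finset_sum _ fun i _ => continuous_finset_sum _ fun j _ => ?_
      exact ((continuous_apply i).mul (continuous_apply j)).mul continuous_const
    have hclosed : IsClosed {z : Fin d → ℝ | 0 ≤ ∑ i, ∑ j, z i * z j * M i j} :=
      isClosed_le continuous_const hcont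
    have hdense : Dense (Set.pi Set.univ fun _ : Fin d => Set.range ((↑) : ℚ → ℝ)) :=
      dense_pi _ fun _ _ => Rat.denseRange_cast
    have hsubset : (Set.pi Set.univ fun _ : Fin d => Set.range ((↑) : ℚ → ℝ)) ⊆
        {z : Fin d → ℝ | 0 ≤ ∑ i, ∑ j, z i * z j * M i j} := by
      intro z hz
      choose q hq using fun i => hz i (Set.mem_univ i)
      have : z = fun i => (q i : ℝ) := funext fun i => (hq i).symm
      rw [Set.mem_setOf_eq, this]
      exact h q
    have : closure (Set.pi Set.univ fun _ : Fin d => Set.range ((↑) : ℚ → ℝ)) ⊆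
        {z : Fin d → ℝ | 0 ≤ ∑ i, ∑ j, z i * z j * M i j} :=
      hclosed.closure_subset_iff.mpr hsubset
    exact this (hdense.closure_eq ▸ Set.mem_univ y)

lemma quad_eq {d : ℕ} (M : Matrix (Fin d) (Fin d) ℝ) (y : Fin d → ℝ) :
    dotProduct (star y) (M.mulVec y) = ∑ i, ∑ j, y i * y j * M i j := by
  simp only [dotProduct, Matrix.mulVec, Pi.star_apply, star_trivial]
  refine Finset.sum_congr rfl fun i _ => ?_
  rw [Finset.mul_sum]
  refine Finset.sum_congr rfl fun j _ => ?_
  ring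

lemma aux_quad {Ω : Type*} {m0 : MeasurableSpace Ω} (μ : Measure Ω) [IsProbabilityMeasure μ]
    (d : ℕ) (Y : Ω → Matrix (Fin d) (Fin d) ℝ) (hpsd : ∀ ω, (Y ω).PosSemidef)
    (H : Ω → ℝ) (hH0 : ∀ᵐ ω ∂μ, 0 ≤ H ω)
    (hintH : ∀ i j, Integrable (fun ω => Y ω i j * H ω) μ)
    (𝒢 : MeasurableSpace Ω) :
    ∀ᵐ ω ∂μ, ∀ x : Fin d → ℚ,
      0 ≤ ∑ i, ∑ j, (x i : ℝ) * (x j : ℝ) *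
        condExp 𝒢 μ (fun ω' => Y ω' i j * H ω') ω := by
  rw [ae_all_iff]
  intro x
  set c : Fin d × Fin d → ℝ := fun p => (x p.1 : ℝ) * (x p.2 : ℝ) with hc
  set f : Fin d × Fin d → Ω → ℝ := fun p ω => c p * (Y ω p.1 p.2 * H ω) with hf
  have hfint : ∀ p ∈ Finset.univ, Integrable (f p) μ :=
    fun p _ => (hintH p.1 p.2).const_mul _
  have h1 : μ[∑ p, f p|𝒢] =ᵐ[μ] ∑ p, μ[f p|𝒢] := condExp_finsetSum hfint 𝒢
  have h2 : ∀ p : Fin d × Fin d,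
      μ[f p|𝒢] =ᵐ[μ] fun ω => c p * (μ[fun ω' => Y ω' p.1 p.2 * H ω'|𝒢]) ω := by
    intro p
    have h := condExp_smul (μ := μ) (m := 𝒢) (c p) (fun ω' => Y ω' p.1 p.2 * H ω')
    have he : (c p • fun ω' => Y ω' p.1 p.2 * H ω') = f p := by
      funext ω; simp [hf, smul_eq_mul]
    rw [he] at h
    refine h.trans ?_
    filter_upwards with ω
    simp [smul_eq_mul]
  have h2' : ∀ᵐ ω ∂μ, ∀ p : Fin d × Fin d,
      (μ[f p|𝒢]) ω = c p * (μ[fun ω' => Y ω' p.1 p.2 * H ω'|𝒢]) ω :=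
    ae_all_iff.2 fun p => h2 p
  have hg0 : 0 ≤ᵐ[μ] (∑ p, f p) := by
    filter_upwards [hH0] with ω hω
    have hquad : 0 ≤ ∑ i, ∑ j, (x i : ℝ) * (x j : ℝ) * Y ω i j := by
      have := (hpsd ω).dotProduct_mulVec_nonneg (fun i => (x i : ℝ))
      rwa [quad_eq] at this
    have : (∑ p, f p) ω = (∑ i, ∑ j, (x i : ℝ) * (x j : ℝ) * Y ω i j) * H ω := by
      rw [Finset.sum_apply]
      rw [← Finset.sum_product', Finset.sum_mul]
      rw [Finset.univ_product_univ]
      refine Finset.sum_congr rfl fun p _ => ?_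
      simp [hf, hc]; ring
    simp only [Pi.zero_apply]
    rw [this]
    exact mul_nonneg hquad hω
  have h4 : 0 ≤ᵐ[μ] μ[∑ p, f p|𝒢] := condExp_nonneg hg0
  filter_upwards [h1, h2', h4] with ω hω1 hω2 hω4
  have : (μ[∑ p, f p|𝒢]) ω = ∑ i, ∑ j, (x i : ℝ) * (x j : ℝ) *
      (μ[fun ω' => Y ω' i j * H ω'|𝒢]) ω := by
    rw [hω1, Finset.sum_apply]
    rw [← Finset.sum_product', Finset.univ_product_univ]
    refine Finset.sum_congr rfl fun p _ => ?_
    rw [hω2 p]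
  rw [this] at hω4
  exact hω4

/-- Comparison lemma for conditional expectations of PSD-matrix-weighted random
variables, in Hilbert–Schmidt (Frobenius) norm. -/
theorem stmt_6 {Ω : Type*} {m0 : MeasurableSpace Ω} (μ : Measure Ω) [IsProbabilityMeasure μ]
    (d : ℕ) (Y : Ω → Matrix (Fin d) (Fin d) ℝ)
    (hpsd : ∀ ω, (Y ω).PosSemidef)
    (F G : Ω → ℝ) (hFG : ∀ᵐ ω ∂μ, |F ω| ≤ G ω)
    (hintF : ∀ i j, Integrable (fun ω => Y ω i j * F ω) μ)
    (hintG : ∀ i j, Integrable (fun ω => Y ω i j * G ω) μ)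
    (𝒢 : MeasurableSpace Ω) (h𝒢 : 𝒢 ≤ m0) :
    ∀ᵐ ω ∂μ,
      Real.sqrt (∑ i, ∑ j, (condExp 𝒢 μ (fun ω' => Y ω' i j * F ω') ω) ^ 2) ≤
      Real.sqrt (∑ i, ∑ j, (condExp 𝒢 μ (fun ω' => Y ω' i j * G ω') ω) ^ 2) := by
  have hYsym : ∀ ω i j, Y ω i j = Y ω j i := by
    intro ω i j
    have := congrFun (congrFun (hpsd ω).1 j) i
    simpa [Matrix.conjTranspose_apply, eq_comm] using this
  have hsub0 : ∀ᵐ ω ∂μ, 0 ≤ G ω - F ω := by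
    filter_upwards [hFG] with ω hω
    have := abs_le.1 hω
    linarith [this.2]
  have hadd0 : ∀ᵐ ω ∂μ, 0 ≤ G ω + F ω := by
    filter_upwards [hFG] with ω hω
    have := abs_le.1 hω
    linarith [this.1]
  have hint₁ : ∀ i j, Integrable (fun ω => Y ω i j * (G ω - F ω)) μ := by
    intro i j
    have := (hintG i j).sub (hintF i j)
    simpa [mul_sub, Pi.sub_def] using this
  have hint₂ : ∀ i j, Integrable (fun ω => Y ω i j * (G ω + F ω)) μ := by
    intro i j
    have := (hintG i j).add (hintF i j)
    simpa [mul_add, Pi.add_def] using this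
  have hq₁ := aux_quad μ d Y hpsd (fun ω => G ω - F ω) hsub0 hint₁ 𝒢
  have hq₂ := aux_quad μ d Y hpsd (fun ω => G ω + F ω) hadd0 hint₂ 𝒢
  have hsubc : ∀ᵐ ω ∂μ, ∀ p : Fin d × Fin d,
      (μ[fun ω' => Y ω' p.1 p.2 * (G ω' - F ω')|𝒢]) ω =
        (μ[fun ω' => Y ω' p.1 p.2 * G ω'|𝒢]) ω - (μ[fun ω' => Y ω' p.1 p.2 * F ω'|𝒢]) ω := by
    rw [ae_all_iff]
    intro p
    have h := condExp_sub (m := 𝒢) (hintG p.1 p.2) (hintF p.1 p.2)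
    have he : ((fun ω => Y ω p.1 p.2 * G ω) - fun ω => Y ω p.1 p.2 * F ω) =
        fun ω' => Y ω' p.1 p.2 * (G ω' - F ω') := by
      funext ω; simp [mul_sub]
    rw [he] at h
    filter_upwards [h] with ω hω
    simpa using hω
  have haddc : ∀ᵐ ω ∂μ, ∀ p : Fin d × Fin d,
      (μ[fun ω' => Y ω' p.1 p.2 * (G ω' + F ω')|𝒢]) ω =
        (μ[fun ω' => Y ω' p.1 p.2 * G ω'|𝒢]) ω + (μ[fun ω' => Y ω' p.1 p.2 * F ω'|𝒢]) ω := by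
    rw [ae_all_iff]
    intro p
    have h := condExp_add (m := 𝒢) (hintG p.1 p.2) (hintF p.1 p.2)
    have he : ((fun ω => Y ω p.1 p.2 * G ω) + fun ω => Y ω p.1 p.2 * F ω) =
        fun ω' => Y ω' p.1 p.2 * (G ω' + F ω') := by
      funext ω; simp [mul_add]
    rw [he] at h
    filter_upwards [h] with ω hω
    simpa using hω
  filter_upwards [hq₁, hq₂, hsubc, haddc] with ω hω1 hω2 hω3 hω4
  set A : Matrix (Fin d) (Fin d) ℝ :=
    Matrix.of fun i j => condExp 𝒢 μ (fun ω' => Y ω' i j * F ω') ω with hA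
  set B : Matrix (Fin d) (Fin d) ℝ :=
    Matrix.of fun i j => condExp 𝒢 μ (fun ω' => Y ω' i j * G ω') ω with hB
  have hAsym : ∀ i j, A i j = A j i := by
    intro i j
    have : (fun ω' => Y ω' i j * F ω') = fun ω' => Y ω' j i * F ω' := by
      funext ω'; rw [hYsym ω' i j]
    simp only [hA, Matrix.of_apply, this]
  have hBsym : ∀ i j, B i j = B j i := by
    intro i j
    have : (fun ω' => Y ω' i j * G ω') = fun ω' => Y ω' j i * G ω' := by
      funext ω'; rw [hYsym ω' i j]
    simp only [hB, Matrix.of_apply, this]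
  have hpsd1 : (B - A).PosSemidef := by
    refine psd_of_rat _ (fun i j => by
      simp only [Matrix.sub_apply, hAsym i j, hBsym i j]) fun x => ?_
    have := hω1 x
    refine le_trans this (le_of_eq ?_)
    refine Finset.sum_congr rfl fun i _ => Finset.sum_congr rfl fun j _ => ?_
    rw [hω3 (i, j)]
    simp [hA, hB]
  have hpsd2 : (B + A).PosSemidef := by
    refine psd_of_rat _ (fun i j => by
      simp only [Matrix.add_apply, hAsym i j, hBsym i j]) fun x => ?_
    have := hω2 x
    refine le_trans this (le_of_eq ?_)
    refine Finset.sum_congr rfl fun i _ => Finset.sum_congr rfl fun j _ => ?_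
    rw [hω4 (i, j)]
    simp [hA, hB]
  have := hs_key A B hpsd1 hpsd2
  exact Real.sqrt_le_sqrt (by simpa [hA, hB] using this)
end

section
/- Let Y be a random vector in ℝ^d with E|Y|^k < ∞ for some integer k ≥ 2, and let 𝒢 be any σ-field. Then almost surely |E[Y^{⊗k} | 𝒢]| ≤ ‖E[Y^{⊗2} |Y|^{k-2} | 𝒢]‖_{H.S.}, where Y^{⊗k} denotes the k-fold tensor power, |·| on tensors is the Euclidean (Frobenius) norm of the corresponding array, and ‖·‖_{H.S.} is the Frobenius norm on d×d matrices. -/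
open MeasureTheory ProbabilityTheory

-- expansion of k-th power of inner product
lemma expand_pow_k {d k : ℕ} (y v : Fin d → ℝ) :
    (∑ j, y j * v j) ^ k =
      ∑ i : Fin k → Fin d, (∏ l, y (i l)) * ∏ l, v (i l) := by
  calc (∑ j, y j * v j) ^ k = ∏ _l : Fin k, (∑ j, y j * v j) := by
        rw [Finset.prod_const, Finset.card_univ, Fintype.card_fin]
    _ = ∑ i ∈ Fintype.piFinset (fun _ : Fin k => (Finset.univ : Finset (Fin d))),
          ∏ l, (y (i l) * v (i l)) := Finset.prod_univ_sum _ _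
    _ = ∑ i : Fin k → Fin d, (∏ l, y (i l)) * ∏ l, v (i l) := by
        rw [Fintype.piFinset_univ]
        exact Finset.sum_congr rfl fun i _ => Finset.prod_mul_distrib

lemma expand_sq_mul {d : ℕ} (y v : Fin d → ℝ) (C R : ℝ) :
    (∑ j, y j * v j) ^ 2 * (C * R) =
      ∑ p : Fin d × Fin d, (y p.1 * y p.2 * C) * (v p.1 * v p.2 * R) := by
  rw [sq, Finset.sum_mul_sum, Fintype.sum_prod_type]
  rw [Finset.sum_mul]
  refine Finset.sum_congr rfl fun j _ => ?_
  rw [Finset.sum_mul]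
  exact Finset.sum_congr rfl fun j' _ => by ring

lemma cs_abs {d : ℕ} (y v : Fin d → ℝ) :
    |∑ j, y j * v j| ≤ Real.sqrt (∑ j, y j ^ 2) * Real.sqrt (∑ j, v j ^ 2) := by
  have h1 : (∑ j, y j * v j) ^ 2 ≤ (∑ j, y j ^ 2) * ∑ j, v j ^ 2 :=
    Finset.sum_mul_sq_le_sq_mul_sq _ _ _
  have h2 : (∑ j, y j ^ 2) * ∑ j, v j ^ 2
      = (Real.sqrt (∑ j, y j ^ 2) * Real.sqrt (∑ j, v j ^ 2)) ^ 2 := by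
    rw [mul_pow, Real.sq_sqrt (by positivity), Real.sq_sqrt (by positivity)]
  exact abs_le_of_sq_le_sq (h1.trans_eq h2) (by positivity)

-- core pointwise inequality
lemma core_ineq {d k : ℕ} (hk : 2 ≤ k) (y v : Fin d → ℝ) :
    (∑ j, y j * v j) ^ k ≤
      (∑ j, y j * v j) ^ 2 *
        ((Real.sqrt (∑ j, y j ^ 2)) ^ (k - 2) * (Real.sqrt (∑ j, v j ^ 2)) ^ (k - 2)) := by
  set s := ∑ j, y j * v j with hs
  set a := Real.sqrt (∑ j, y j ^ 2) with ha
  set b := Real.sqrt (∑ j, v j ^ 2) with hb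
  have ha0 : 0 ≤ a := Real.sqrt_nonneg _
  have hb0 : 0 ≤ b := Real.sqrt_nonneg _
  have hsab : |s| ≤ a * b := by
    have h1 : s ^ 2 ≤ (∑ j, y j ^ 2) * ∑ j, v j ^ 2 :=
      Finset.sum_mul_sq_le_sq_mul_sq _ _ _
    have h2 : (∑ j, y j ^ 2) * ∑ j, v j ^ 2 = (a * b) ^ 2 := by
      rw [mul_pow, ha, hb, Real.sq_sqrt (by positivity), Real.sq_sqrt (by positivity)]
    exact abs_le_of_sq_le_sq (h1.trans_eq h2) (by positivity)
  have hk' : 2 + (k - 2) = k := Nat.add_sub_cancel' hk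
  calc s ^ k = s ^ 2 * s ^ (k - 2) := by rw [← pow_add, hk']
    _ ≤ s ^ 2 * (a ^ (k - 2) * b ^ (k - 2)) := by
        refine mul_le_mul_of_nonneg_left ?_ (sq_nonneg s)
        calc s ^ (k - 2) ≤ |s| ^ (k - 2) := by
              rw [← abs_pow]; exact le_abs_self _
          _ ≤ (a * b) ^ (k - 2) := pow_le_pow_left₀ (abs_nonneg s) hsab _
          _ = a ^ (k - 2) * b ^ (k - 2) := mul_pow a b _

lemma condexp_lin {Ω : Type*} {m0 : MeasurableSpace Ω} {μ : Measure Ω}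
    {𝒢 : MeasurableSpace Ω} {ι : Type*} [Fintype ι] (c : ι → ℝ) (g : ι → Ω → ℝ)
    (hg : ∀ i, Integrable (g i) μ) :
    μ[fun ω => ∑ i, c i * g i ω|𝒢] =ᵐ[μ] fun ω => ∑ i, c i * (μ[g i|𝒢]) ω := by
  have h1 : (fun ω => ∑ i, c i * g i ω) = ∑ i, c i • g i := by
    funext ω; simp [Finset.sum_apply]
  rw [h1]
  refine (condExp_finsetSum (fun i _ => Integrable.smul (c i) (hg i)) 𝒢).trans ?_
  have h2 : ∀ᵐ ω ∂μ, ∀ i, (μ[c i • g i|𝒢]) ω = c i • (μ[g i|𝒢]) ω :=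
    ae_all_iff.2 fun i => condExp_smul (c i) (g i) 𝒢
  filter_upwards [h2] with ω hω
  simp only [Finset.sum_apply, Pi.smul_apply, smul_eq_mul] at hω ⊢
  exact Finset.sum_congr rfl fun i _ => hω i

lemma integral_mul_condexp {Ω : Type*} {m0 : MeasurableSpace Ω} {μ : Measure Ω}
    [IsProbabilityMeasure μ] {𝒢 : MeasurableSpace Ω} (h𝒢 : 𝒢 ≤ m0) {h g : Ω → ℝ}
    (hh : StronglyMeasurable[𝒢] h) (C : ℝ) (hbd : ∀ ω, |h ω| ≤ C) (hg : Integrable g μ) :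
    ∫ ω, h ω * g ω ∂μ = ∫ ω, h ω * (μ[g|𝒢]) ω ∂μ := by
  have hint : Integrable (fun ω => h ω * g ω) μ :=
    hg.bdd_mul ((hh.mono h𝒢).aestronglyMeasurable)
      (ae_of_all _ fun ω => by rw [Real.norm_eq_abs]; exact hbd ω)
  have hint' : Integrable (h * g) μ := hint
  calc ∫ ω, h ω * g ω ∂μ = ∫ ω, (μ[h * g|𝒢]) ω ∂μ := (integral_condExp h𝒢 (f := h * g)).symm
    _ = ∫ ω, h ω * (μ[g|𝒢]) ω ∂μ := by
        refine integral_congr_ae ?_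
        filter_upwards [condExp_mul_of_stronglyMeasurable_left hh hint' hg] with ω hω
        exact hω

/-- Tensor-moment comparison lemma: the Euclidean norm of the conditional
expectation of the k-fold tensor power is bounded by the Frobenius norm of the
conditional expectation of `Y^{⊗2}|Y|^{k-2}`. -/
theorem stmt_7 {Ω : Type*} {m0 : MeasurableSpace Ω} (μ : Measure Ω) [IsProbabilityMeasure μ]
    (d k : ℕ) (hk : 2 ≤ k) (Y : Ω → Fin d → ℝ) (hY : Measurable Y)
    (hmom : Integrable (fun ω => (Real.sqrt (∑ i, Y ω i ^ 2)) ^ k) μ)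
    (𝒢 : MeasurableSpace Ω) (h𝒢 : 𝒢 ≤ m0) :
    ∀ᵐ ω ∂μ,
      Real.sqrt (∑ i : Fin k → Fin d, (condExp 𝒢 μ (fun ω' => ∏ l, Y ω' (i l)) ω) ^ 2) ≤
      Real.sqrt (∑ i, ∑ j, (condExp 𝒢 μ
        (fun ω' => Y ω' i * Y ω' j * (Real.sqrt (∑ i', Y ω' i' ^ 2)) ^ (k - 2)) ω) ^ 2) := by
  classical
  set r : Ω → ℝ := fun ω => Real.sqrt (∑ j, Y ω j ^ 2) with hr_def
  set P : (Fin k → Fin d) → Ω → ℝ := fun i ω => ∏ l, Y ω (i l) with hP_def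
  set Q : Fin d × Fin d → Ω → ℝ :=
    fun p ω => Y ω p.1 * Y ω p.2 * Real.sqrt (∑ j, Y ω j ^ 2) ^ (k - 2) with hQ_def
  set T : (Fin k → Fin d) → Ω → ℝ := fun i => μ[P i|𝒢] with hT_def
  set M : Fin d × Fin d → Ω → ℝ := fun p => μ[Q p|𝒢] with hM_def
  have hYj : ∀ j, Measurable[m0] fun ω => Y ω j := fun j => (measurable_pi_apply j).comp hY
  have hrmeas : Measurable[m0] r :=
    (Finset.measurable_sum _ fun j _ => ((hYj j).pow_const 2)).sqrt
  have hr0 : ∀ ω, 0 ≤ r ω := fun ω => Real.sqrt_nonneg _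
  have habs : ∀ ω j, |Y ω j| ≤ r ω := by
    intro ω j
    show |Y ω j| ≤ Real.sqrt (∑ j, Y ω j ^ 2)
    rw [← Real.sqrt_sq_eq_abs]
    exact Real.sqrt_le_sqrt (Finset.single_le_sum (f := fun j => Y ω j ^ 2)
      (fun j _ => sq_nonneg _) (Finset.mem_univ j))
  have hk' : 2 + (k - 2) = k := Nat.add_sub_cancel' hk
  have hPmeas : ∀ i, Measurable[m0] (P i) := fun i => Finset.measurable_prod _ fun l _ => hYj (i l)
  have hQmeas : ∀ p, Measurable[m0] (Q p) := fun p =>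
    ((hYj p.1).mul (hYj p.2)).mul (hrmeas.pow_const _)
  have hPbd : ∀ i ω, |P i ω| ≤ r ω ^ k := by
    intro i ω
    calc |P i ω| = ∏ l, |Y ω (i l)| := Finset.abs_prod _ _
      _ ≤ ∏ _l : Fin k, r ω :=
        Finset.prod_le_prod (fun l _ => abs_nonneg _) (fun l _ => habs ω (i l))
      _ = r ω ^ k := by rw [Finset.prod_const, Finset.card_univ, Fintype.card_fin]
  have hQbd : ∀ p ω, |Q p ω| ≤ r ω ^ k := by
    intro p ω
    have h1 : |Q p ω| = |Y ω p.1| * |Y ω p.2| * r ω ^ (k - 2) := by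
      rw [hQ_def]
      simp only [abs_mul, abs_pow]
      rw [abs_of_nonneg (hr0 ω)]
    have h2 : |Y ω p.1| * |Y ω p.2| ≤ r ω ^ 2 := by
      rw [sq]; exact mul_le_mul (habs ω p.1) (habs ω p.2) (abs_nonneg _) (hr0 ω)
    rw [h1]
    calc |Y ω p.1| * |Y ω p.2| * r ω ^ (k - 2) ≤ r ω ^ 2 * r ω ^ (k - 2) :=
          mul_le_mul_of_nonneg_right h2 (pow_nonneg (hr0 ω) _)
      _ = r ω ^ k := by rw [← pow_add, hk']
  have hP_int : ∀ i, Integrable (P i) μ := fun i =>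
    hmom.mono' (hPmeas i).aestronglyMeasurable
      (ae_of_all _ fun ω => by rw [Real.norm_eq_abs]; exact hPbd i ω)
  have hQ_int : ∀ p, Integrable (Q p) μ := fun p =>
    hmom.mono' (hQmeas p).aestronglyMeasurable
      (ae_of_all _ fun ω => by rw [Real.norm_eq_abs]; exact hQbd p ω)
  have stepA : ∀ y : Fin d → ℝ, ∀ᵐ ω ∂μ,
      (∑ i : Fin k → Fin d, (∏ l, y (i l)) * T i ω) ≤
        ∑ p : Fin d × Fin d, (y p.1 * y p.2 * Real.sqrt (∑ j, y j ^ 2) ^ (k - 2)) * M p ω := by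
    intro y
    have hLfun : (fun ω' => (∑ j, y j * Y ω' j) ^ k)
        = fun ω' => ∑ i : Fin k → Fin d, (∏ l, y (i l)) * P i ω' := by
      funext ω'; exact expand_pow_k y (Y ω')
    have hRfun : (fun ω' => (∑ j, y j * Y ω' j) ^ 2
          * (Real.sqrt (∑ j, y j ^ 2) ^ (k - 2) * r ω' ^ (k - 2)))
        = fun ω' => ∑ p : Fin d × Fin d,
            (y p.1 * y p.2 * Real.sqrt (∑ j, y j ^ 2) ^ (k - 2)) * Q p ω' := by
      funext ω'; exact expand_sq_mul y (Y ω') _ _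
    have hsmeas : Measurable[m0] fun ω' => ∑ j, y j * Y ω' j :=
      Finset.measurable_sum _ fun j _ => (hYj j).const_mul (y j)
    have hpow : ∀ x : ℝ, x ^ 2 * x ^ (k - 2) = x ^ k := fun x => by rw [← pow_add, hk']
    have hLint : Integrable (fun ω' => (∑ j, y j * Y ω' j) ^ k) μ := by
      refine (hmom.const_mul (Real.sqrt (∑ j, y j ^ 2) ^ k)).mono'
        ((hsmeas.pow_const k).aestronglyMeasurable) (ae_of_all _ fun ω' => ?_)
      rw [Real.norm_eq_abs, abs_pow]
      calc |∑ j, y j * Y ω' j| ^ k ≤ (Real.sqrt (∑ j, y j ^ 2) * r ω') ^ k :=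
            pow_le_pow_left₀ (abs_nonneg _) (cs_abs y (Y ω')) k
        _ = Real.sqrt (∑ j, y j ^ 2) ^ k * r ω' ^ k := mul_pow _ _ _
    have hRint : Integrable (fun ω' => (∑ j, y j * Y ω' j) ^ 2
          * (Real.sqrt (∑ j, y j ^ 2) ^ (k - 2) * r ω' ^ (k - 2))) μ := by
      refine (hmom.const_mul (Real.sqrt (∑ j, y j ^ 2) ^ k)).mono'
        (((hsmeas.pow_const 2).mul
          ((hrmeas.pow_const (k - 2)).const_mul _)).aestronglyMeasurable)
        (ae_of_all _ fun ω' => ?_)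
      have ha0 : (0:ℝ) ≤ Real.sqrt (∑ j, y j ^ 2) := Real.sqrt_nonneg _
      have hr0' : (0:ℝ) ≤ r ω' := hr0 ω'
      rw [Real.norm_eq_abs, abs_of_nonneg (by positivity)]
      calc (∑ j, y j * Y ω' j) ^ 2 * (Real.sqrt (∑ j, y j ^ 2) ^ (k - 2) * r ω' ^ (k - 2))
          ≤ (Real.sqrt (∑ j, y j ^ 2) * r ω') ^ 2
              * (Real.sqrt (∑ j, y j ^ 2) ^ (k - 2) * r ω' ^ (k - 2)) := by
            refine mul_le_mul_of_nonneg_right ?_ (by positivity)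
            rw [← sq_abs]
            exact pow_le_pow_left₀ (abs_nonneg _) (cs_abs y (Y ω')) 2
        _ = (Real.sqrt (∑ j, y j ^ 2) ^ 2 * Real.sqrt (∑ j, y j ^ 2) ^ (k - 2))
              * (r ω' ^ 2 * r ω' ^ (k - 2)) := by ring
        _ = Real.sqrt (∑ j, y j ^ 2) ^ k * r ω' ^ k := by rw [hpow, hpow]
    have hmono := condExp_mono (μ := μ) (m := 𝒢) hLint hRint
      (ae_of_all _ fun ω' => core_ineq hk y (Y ω'))
    rw [hLfun, hRfun] at hmono
    have hL := condexp_lin (μ := μ) (𝒢 := 𝒢) (fun i : Fin k → Fin d => ∏ l, y (i l)) P hP_int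
    have hR := condexp_lin (μ := μ) (𝒢 := 𝒢)
      (fun p : Fin d × Fin d => y p.1 * y p.2 * Real.sqrt (∑ j, y j ^ 2) ^ (k - 2)) Q hQ_int
    filter_upwards [hmono, hL, hR] with ω h1 h2 h3
    calc ∑ i : Fin k → Fin d, (∏ l, y (i l)) * T i ω
        = (μ[fun ω' => ∑ i : Fin k → Fin d, (∏ l, y (i l)) * P i ω'|𝒢]) ω := h2.symm
      _ ≤ (μ[fun ω' => ∑ p : Fin d × Fin d,
            (y p.1 * y p.2 * Real.sqrt (∑ j, y j ^ 2) ^ (k - 2)) * Q p ω'|𝒢]) ω := h1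
      _ = _ := h3
  have stepB : ∀ᵐ ω ∂μ, ∀ y : Fin d → ℝ,
      (∑ i : Fin k → Fin d, (∏ l, y (i l)) * T i ω) ≤
        ∑ p : Fin d × Fin d, (y p.1 * y p.2 * Real.sqrt (∑ j, y j ^ 2) ^ (k - 2)) * M p ω := by
    obtain ⟨D, hDc, hDd⟩ := TopologicalSpace.exists_countable_dense (Fin d → ℝ)
    have h1 : ∀ᵐ ω ∂μ, ∀ y ∈ D,
        (∑ i : Fin k → Fin d, (∏ l, y (i l)) * T i ω) ≤
          ∑ p : Fin d × Fin d, (y p.1 * y p.2 * Real.sqrt (∑ j, y j ^ 2) ^ (k - 2)) * M p ω :=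
      (ae_ball_iff hDc).2 fun y _ => stepA y
    filter_upwards [h1] with ω hω y
    have hcont1 : Continuous fun y : Fin d → ℝ =>
        ∑ i : Fin k → Fin d, (∏ l, y (i l)) * T i ω :=
      continuous_finset_sum _ fun i _ =>
        (continuous_finset_prod _ fun l _ => continuous_apply (i l)).mul continuous_const
    have hcont2 : Continuous fun y : Fin d → ℝ =>
        ∑ p : Fin d × Fin d, (y p.1 * y p.2 * Real.sqrt (∑ j, y j ^ 2) ^ (k - 2)) * M p ω := by
      refine continuous_finset_sum _ fun p _ => Continuous.mul ?_ continuous_const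
      refine Continuous.mul ((continuous_apply p.1).mul (continuous_apply p.2)) ?_
      exact (Real.continuous_sqrt.comp
        (continuous_finset_sum _ fun j _ => (continuous_apply j).pow 2)).pow _
    have hclosed : IsClosed {y : Fin d → ℝ |
        (∑ i : Fin k → Fin d, (∏ l, y (i l)) * T i ω) ≤
          ∑ p : Fin d × Fin d, (y p.1 * y p.2 * Real.sqrt (∑ j, y j ^ 2) ^ (k - 2)) * M p ω} :=
      isClosed_le hcont1 hcont2
    have hsub : closure D ⊆ {y : Fin d → ℝ |
        (∑ i : Fin k → Fin d, (∏ l, y (i l)) * T i ω) ≤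
          ∑ p : Fin d × Fin d, (y p.1 * y p.2 * Real.sqrt (∑ j, y j ^ 2) ^ (k - 2)) * M p ω} :=
      hclosed.closure_subset_iff.2 fun y hy => hω y hy
    exact hsub (hDd y)
  have diag : ∀ᵐ ω ∂μ,
      (∑ i : Fin k → Fin d, P i ω * T i ω) ≤ ∑ p : Fin d × Fin d, Q p ω * M p ω := by
    filter_upwards [stepB] with ω hω
    exact hω (Y ω)
  have hT_sm : ∀ i, StronglyMeasurable[𝒢] (T i) := fun i => stronglyMeasurable_condExp
  have hM_sm : ∀ p, StronglyMeasurable[𝒢] (M p) := fun p => stronglyMeasurable_condExp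
  set F : Ω → ℝ := fun ω => ∑ i : Fin k → Fin d, T i ω ^ 2 with hF_def
  set G : Ω → ℝ := fun ω => ∑ p : Fin d × Fin d, M p ω ^ 2 with hG_def
  have hF_m : Measurable[𝒢] F :=
    Finset.measurable_sum _ fun i _ => ((hT_sm i).measurable.pow_const 2)
  have hG_m : Measurable[𝒢] G :=
    Finset.measurable_sum _ fun p _ => ((hM_sm p).measurable.pow_const 2)
  have hF0 : ∀ ω, 0 ≤ F ω := fun ω => Finset.sum_nonneg fun i _ => sq_nonneg _
  have hG0 : ∀ ω, 0 ≤ G ω := fun ω => Finset.sum_nonneg fun p _ => sq_nonneg _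
  have hTsq_le : ∀ i ω, T i ω ^ 2 ≤ F ω := fun i ω =>
    Finset.single_le_sum (f := fun i => T i ω ^ 2) (fun _ _ => sq_nonneg _) (Finset.mem_univ i)
  have hMsq_le : ∀ p ω, M p ω ^ 2 ≤ G ω := fun p ω =>
    Finset.single_le_sum (f := fun p => M p ω ^ 2) (fun _ _ => sq_nonneg _) (Finset.mem_univ p)
  have hFG : ∀ᵐ ω ∂μ, F ω ≤ G ω := by
    have key : ∀ n : ℕ, μ {ω | G ω + ((n : ℝ) + 1)⁻¹ ≤ F ω ∧ F ω ≤ n} = 0 := by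
      intro n
      set s : Set Ω := {ω | G ω + ((n : ℝ) + 1)⁻¹ ≤ F ω ∧ F ω ≤ n} with hs_def
      have hs𝒢 : MeasurableSet[𝒢] s :=
        (measurableSet_le (hG_m.add_const _) hF_m).inter
          (measurableSet_le hF_m measurable_const)
      have hsm0 : MeasurableSet[m0] s := h𝒢 _ hs𝒢
      have hFn : ∀ ω ∈ s, F ω ≤ n := fun ω h => h.2
      have hGn : ∀ ω ∈ s, G ω ≤ n := fun ω h =>
        le_trans (le_trans (le_add_of_nonneg_right (by positivity)) h.1) h.2
      have hTbd : ∀ i ω, |Set.indicator s (T i) ω| ≤ Real.sqrt n := by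
        intro i ω
        by_cases hωs : ω ∈ s
        · rw [Set.indicator_of_mem hωs, ← Real.sqrt_sq_eq_abs]
          exact Real.sqrt_le_sqrt ((hTsq_le i ω).trans (hFn ω hωs))
        · rw [Set.indicator_of_notMem hωs, abs_zero]
          exact Real.sqrt_nonneg _
      have hMbd : ∀ p ω, |Set.indicator s (M p) ω| ≤ Real.sqrt n := by
        intro p ω
        by_cases hωs : ω ∈ s
        · rw [Set.indicator_of_mem hωs, ← Real.sqrt_sq_eq_abs]
          exact Real.sqrt_le_sqrt ((hMsq_le p ω).trans (hGn ω hωs))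
        · rw [Set.indicator_of_notMem hωs, abs_zero]
          exact Real.sqrt_nonneg _
      have eT1 : ∀ i, (fun ω => Set.indicator s (T i) ω * P i ω)
          = Set.indicator s fun ω => P i ω * T i ω := by
        intro i; funext ω
        by_cases hωs : ω ∈ s <;>
          simp [Set.indicator_of_mem, Set.indicator_of_notMem, hωs, mul_comm]
      have eT2 : ∀ i, (fun ω => Set.indicator s (T i) ω * T i ω)
          = Set.indicator s fun ω => T i ω ^ 2 := by
        intro i; funext ω
        by_cases hωs : ω ∈ s <;>
          simp [Set.indicator_of_mem, Set.indicator_of_notMem, hωs, sq]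
      have eM1 : ∀ p, (fun ω => Set.indicator s (M p) ω * Q p ω)
          = Set.indicator s fun ω => Q p ω * M p ω := by
        intro p; funext ω
        by_cases hωs : ω ∈ s <;>
          simp [Set.indicator_of_mem, Set.indicator_of_notMem, hωs, mul_comm]
      have eM2 : ∀ p, (fun ω => Set.indicator s (M p) ω * M p ω)
          = Set.indicator s fun ω => M p ω ^ 2 := by
        intro p; funext ω
        by_cases hωs : ω ∈ s <;>
          simp [Set.indicator_of_mem, Set.indicator_of_notMem, hωs, sq]
      have hTP_int : ∀ i, Integrable (Set.indicator s fun ω => P i ω * T i ω) μ := by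
        intro i
        rw [← eT1 i]
        exact (hP_int i).bdd_mul
          ((((hT_sm i).indicator hs𝒢).mono h𝒢).aestronglyMeasurable)
          (ae_of_all _ fun ω => by rw [Real.norm_eq_abs]; exact hTbd i ω)
      have hMQ_int : ∀ p, Integrable (Set.indicator s fun ω => Q p ω * M p ω) μ := by
        intro p
        rw [← eM1 p]
        exact (hQ_int p).bdd_mul
          ((((hM_sm p).indicator hs𝒢).mono h𝒢).aestronglyMeasurable)
          (ae_of_all _ fun ω => by rw [Real.norm_eq_abs]; exact hMbd p ω)
      have hTsq_int : ∀ i, Integrable (Set.indicator s fun ω => T i ω ^ 2) μ := by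
        intro i
        refine (integrable_const ((n : ℝ))).mono'
          (((((hT_sm i).mono h𝒢).measurable.pow_const 2).indicator hsm0).aestronglyMeasurable)
          (ae_of_all _ fun ω => ?_)
        rw [Real.norm_eq_abs]
        by_cases hωs : ω ∈ s
        · rw [Set.indicator_of_mem hωs, abs_of_nonneg (sq_nonneg _)]
          exact (hTsq_le i ω).trans (hFn ω hωs)
        · rw [Set.indicator_of_notMem hωs, abs_zero]; positivity
      have hMsq_int : ∀ p, Integrable (Set.indicator s fun ω => M p ω ^ 2) μ := by
        intro p
        refine (integrable_const ((n : ℝ))).mono'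
          (((((hM_sm p).mono h𝒢).measurable.pow_const 2).indicator hsm0).aestronglyMeasurable)
          (ae_of_all _ fun ω => ?_)
        rw [Real.norm_eq_abs]
        by_cases hωs : ω ∈ s
        · rw [Set.indicator_of_mem hωs, abs_of_nonneg (sq_nonneg _)]
          exact (hMsq_le p ω).trans (hGn ω hωs)
        · rw [Set.indicator_of_notMem hωs, abs_zero]; positivity
      have hTid : ∀ i, ∫ ω, Set.indicator s (fun ω => T i ω ^ 2) ω ∂μ
          = ∫ ω, Set.indicator s (fun ω => P i ω * T i ω) ω ∂μ := by
        intro i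
        calc ∫ ω, Set.indicator s (fun ω => T i ω ^ 2) ω ∂μ
            = ∫ ω, Set.indicator s (T i) ω * (μ[P i|𝒢]) ω ∂μ := by rw [eT2 i]
          _ = ∫ ω, Set.indicator s (T i) ω * P i ω ∂μ :=
              (integral_mul_condexp h𝒢 ((hT_sm i).indicator hs𝒢) (Real.sqrt n)
                (hTbd i) (hP_int i)).symm
          _ = ∫ ω, Set.indicator s (fun ω => P i ω * T i ω) ω ∂μ := by rw [eT1 i]
      have hMid : ∀ p, ∫ ω, Set.indicator s (fun ω => M p ω ^ 2) ω ∂μ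
          = ∫ ω, Set.indicator s (fun ω => Q p ω * M p ω) ω ∂μ := by
        intro p
        calc ∫ ω, Set.indicator s (fun ω => M p ω ^ 2) ω ∂μ
            = ∫ ω, Set.indicator s (M p) ω * (μ[Q p|𝒢]) ω ∂μ := by rw [eM2 p]
          _ = ∫ ω, Set.indicator s (M p) ω * Q p ω ∂μ :=
              (integral_mul_condexp h𝒢 ((hM_sm p).indicator hs𝒢) (Real.sqrt n)
                (hMbd p) (hQ_int p)).symm
          _ = ∫ ω, Set.indicator s (fun ω => Q p ω * M p ω) ω ∂μ := by rw [eM1 p]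
      -- F-side sum identity
      have hFsum : ∫ ω, Set.indicator s F ω ∂μ
          = ∑ i : Fin k → Fin d, ∫ ω, Set.indicator s (fun ω => T i ω ^ 2) ω ∂μ := by
        rw [← integral_finset_sum _ fun i _ => hTsq_int i]
        refine integral_congr_ae (ae_of_all _ fun ω => ?_)
        by_cases hωs : ω ∈ s <;>
          simp [Set.indicator_of_mem, Set.indicator_of_notMem, hωs, hF_def]
      have hGsum : ∫ ω, Set.indicator s G ω ∂μ
          = ∑ p : Fin d × Fin d, ∫ ω, Set.indicator s (fun ω => M p ω ^ 2) ω ∂μ := by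
        rw [← integral_finset_sum _ fun p _ => hMsq_int p]
        refine integral_congr_ae (ae_of_all _ fun ω => ?_)
        by_cases hωs : ω ∈ s <;>
          simp [Set.indicator_of_mem, Set.indicator_of_notMem, hωs, hG_def]
      -- middle comparison
      have hmid : ∑ i : Fin k → Fin d, ∫ ω, Set.indicator s (fun ω => P i ω * T i ω) ω ∂μ
          ≤ ∑ p : Fin d × Fin d, ∫ ω, Set.indicator s (fun ω => Q p ω * M p ω) ω ∂μ := by
        rw [← integral_finset_sum _ fun i _ => hTP_int i,
            ← integral_finset_sum _ fun p _ => hMQ_int p]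
        refine integral_mono_ae (integrable_finset_sum _ fun i _ => hTP_int i)
          (integrable_finset_sum _ fun p _ => hMQ_int p) ?_
        filter_upwards [diag] with ω hω
        by_cases hωs : ω ∈ s
        · simpa [Set.indicator_of_mem, hωs] using hω
        · simp [Set.indicator_of_notMem, hωs]
      have hupper : ∫ ω, Set.indicator s F ω ∂μ ≤ ∫ ω, Set.indicator s G ω ∂μ := by
        rw [hFsum, hGsum]
        calc ∑ i : Fin k → Fin d, ∫ ω, Set.indicator s (fun ω => T i ω ^ 2) ω ∂μ
            = ∑ i : Fin k → Fin d, ∫ ω, Set.indicator s (fun ω => P i ω * T i ω) ω ∂μ :=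
              Finset.sum_congr rfl fun i _ => hTid i
          _ ≤ ∑ p : Fin d × Fin d, ∫ ω, Set.indicator s (fun ω => Q p ω * M p ω) ω ∂μ := hmid
          _ = ∑ p : Fin d × Fin d, ∫ ω, Set.indicator s (fun ω => M p ω ^ 2) ω ∂μ :=
              (Finset.sum_congr rfl fun p _ => (hMid p).symm)
      -- lower bound
      have hGind_int : Integrable (Set.indicator s G) μ := by
        refine (integrable_const ((n : ℝ))).mono'
          ((hG_m.mono h𝒢 le_rfl).indicator hsm0).aestronglyMeasurable
          (ae_of_all _ fun ω => ?_)
        rw [Real.norm_eq_abs]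
        by_cases hωs : ω ∈ s
        · rw [Set.indicator_of_mem hωs, abs_of_nonneg (hG0 ω)]; exact hGn ω hωs
        · rw [Set.indicator_of_notMem hωs, abs_zero]; positivity
      have hFind_int : Integrable (Set.indicator s F) μ := by
        refine (integrable_const ((n : ℝ))).mono'
          ((hF_m.mono h𝒢 le_rfl).indicator hsm0).aestronglyMeasurable
          (ae_of_all _ fun ω => ?_)
        rw [Real.norm_eq_abs]
        by_cases hωs : ω ∈ s
        · rw [Set.indicator_of_mem hωs, abs_of_nonneg (hF0 ω)]; exact hFn ω hωs
        · rw [Set.indicator_of_notMem hωs, abs_zero]; positivity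
      have hlow : ∫ ω, Set.indicator s G ω ∂μ + (μ s).toReal * ((n : ℝ) + 1)⁻¹
          ≤ ∫ ω, Set.indicator s F ω ∂μ := by
        have hconst : ∫ ω, Set.indicator s (fun _ => ((n : ℝ) + 1)⁻¹) ω ∂μ
            = (μ s).toReal * ((n : ℝ) + 1)⁻¹ := by
          letI : MeasurableSpace Ω := m0
          rw [integral_indicator_const (μ := μ) (((n : ℝ) + 1)⁻¹) hsm0]
          simp [smul_eq_mul, measureReal_def]
        have hcint : Integrable (Set.indicator s fun _ : Ω => ((n : ℝ) + 1)⁻¹) μ := by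
          refine (integrable_const (((n : ℝ) + 1)⁻¹)).mono'
            ((measurable_const.indicator hsm0).aestronglyMeasurable)
            (ae_of_all _ fun ω => ?_)
          rw [Real.norm_eq_abs]
          by_cases hωs : ω ∈ s
          · rw [Set.indicator_of_mem hωs, abs_of_nonneg (by positivity)]
          · rw [Set.indicator_of_notMem hωs, abs_zero]; positivity
        calc ∫ ω, Set.indicator s G ω ∂μ + (μ s).toReal * ((n : ℝ) + 1)⁻¹
            = ∫ ω, (Set.indicator s G ω + Set.indicator s (fun _ => ((n : ℝ) + 1)⁻¹) ω) ∂μ := by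
              rw [integral_add hGind_int hcint, hconst]
          _ ≤ ∫ ω, Set.indicator s F ω ∂μ := by
              refine integral_mono_ae (hGind_int.add hcint) hFind_int
                (ae_of_all _ fun ω => ?_)
              by_cases hωs : ω ∈ s
              · simp only [Set.indicator_of_mem hωs]
                exact hωs.1
              · simp [Set.indicator_of_notMem, hωs]
      have hmu0 : (μ s).toReal * ((n : ℝ) + 1)⁻¹ ≤ 0 := by linarith
      have hpos : (0 : ℝ) < ((n : ℝ) + 1)⁻¹ := by positivity
      have htr : (μ s).toReal = 0 := by nlinarith [ENNReal.toReal_nonneg (a := μ s)]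
      exact ((ENNReal.toReal_eq_zero_iff _).1 htr).resolve_right (measure_ne_top μ s)
    have hsub : {ω | G ω < F ω}
        ⊆ ⋃ n : ℕ, {ω | G ω + ((n : ℝ) + 1)⁻¹ ≤ F ω ∧ F ω ≤ n} := by
      intro ω hω
      simp only [Set.mem_setOf_eq] at hω
      have hc : 0 < F ω - G ω := by linarith
      obtain ⟨n1, hn1⟩ := exists_nat_ge (F ω - G ω)⁻¹
      obtain ⟨n2, hn2⟩ := exists_nat_ge (F ω)
      refine Set.mem_iUnion.2 ⟨max n1 n2, ?_, ?_⟩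
      · have h1 : (F ω - G ω)⁻¹ ≤ ((max n1 n2 : ℕ) : ℝ) + 1 := by
          refine hn1.trans (le_trans ?_ (le_add_of_nonneg_right zero_le_one))
          exact_mod_cast Nat.cast_le.2 (le_max_left n1 n2)
        have h2 : (((max n1 n2 : ℕ) : ℝ) + 1)⁻¹ ≤ F ω - G ω := by
          rw [← inv_inv (F ω - G ω)]
          exact inv_anti₀ (by positivity) h1
        linarith
      · exact hn2.trans (by exact_mod_cast Nat.cast_le.2 (le_max_right n1 n2))
    have hnull : μ {ω | G ω < F ω} = 0 :=
      measure_mono_null hsub (measure_iUnion_null fun n => key n)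
    rw [ae_iff]
    simpa [not_le] using hnull
  filter_upwards [hFG] with ω h
  have h2 := Real.sqrt_le_sqrt h
  have h3 : (∑ p : Fin d × Fin d, M p ω ^ 2) = ∑ i, ∑ j, M (i, j) ω ^ 2 :=
    Fintype.sum_prod_type _
  show Real.sqrt (∑ i : Fin k → Fin d, T i ω ^ 2)
    ≤ Real.sqrt (∑ i, ∑ j, M (i, j) ω ^ 2)
  rw [← h3]
  exact h2
end
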